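/- Let v : I → ℝ be defined on an interval I containing [3π/5, 2π/3], suppose θ ↦ v(θ) − λθ² is convex on I for some λ > 0, and suppose v attains its minimum over I at 2π/3. Then for every θ ∈ I with θ ≤ 3π/5 one has v(θ) − v(3π/5) ≥ λ·(2π/3 − 3π/5)·(3π/5 − θ). -/
import Mathlib


/-- if `v` is `λ`-strongly convex on an interval `I ⊇ [3π/5, 2π/3]` and
attains its minimum over `I` at `2π/3`, then for all `θ ∈ I` with `θ ≤ 3π/5` one has
`v(θ) − v(3π/5) ≥ λ·(2π/3 − 3π/5)·(3π/5 − θ)`. -/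
theorem stmt11
    (I : Set ℝ) (v : ℝ → ℝ) (lam : ℝ)
    (hlam : 0 < lam)
    (hsub : Set.Icc (3 * Real.pi / 5) (2 * Real.pi / 3) ⊆ I)
    (hconv : ConvexOn ℝ I (fun θ => v θ - lam * θ ^ 2))
    (hmin : ∀ θ ∈ I, v (2 * Real.pi / 3) ≤ v θ) :
    ∀ θ ∈ I, θ ≤ 3 * Real.pi / 5 →
      v θ - v (3 * Real.pi / 5) ≥
        lam * (2 * Real.pi / 3 - 3 * Real.pi / 5) * (3 * Real.pi / 5 - θ) := by
  intro θ hθI hθle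
  have hpi : (0:ℝ) < Real.pi := Real.pi_pos
  set a : ℝ := 3 * Real.pi / 5 with ha
  set b : ℝ := 2 * Real.pi / 3 with hb
  have hab : a < b := by rw [ha, hb]; nlinarith
  have haI : a ∈ I := hsub ⟨le_refl _, le_of_lt hab⟩
  have hbI : b ∈ I := hsub ⟨le_of_lt hab, le_refl _⟩
  have hvb : v b ≤ v a := hmin a haI
  rcases eq_or_lt_of_le hθle with h | h
  · subst h; nlinarith
  · have hslope := hconv.slope_mono_adjacent hθI hbI h hab


    rw [div_le_div_iff₀ (by linarith) (by linarith)] at hslope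
    nlinarith [sq_nonneg (a - θ), mul_pos hlam (sub_pos.mpr h), mul_pos hlam (sub_pos.mpr hab)]
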